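/- arXiv:1303.5349 — 6 statements merged into one kernel-verified Lean document; each statement's English description precedes it below -/
import Mathlib

section
/- Let n ≥ 1 and let a : Fin (n+1) → ℝ be strictly increasing with a 0 > 0 (so all a i are positive and pairwise distinct). Let Z : Fin (n+1) → ℂ be nonzero. Then Z satisfies the critical point equations for the quadric section s = Σ_j a_j Z_j² of O(2) over ℂP^n, namely a_i · Z_i · (Σ_j |Z_j|²) = (Σ_j a_j Z_j²) · conj(Z_i) for every i, if and only if exactly one coordinate of Z is nonzero. (Equivalently: the critical points of s on ℂP^n are exactly the n+1 coordinate points p_0, …, p_n.) -/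
open Complex Finset

/-- The critical points of the quadric section `s = Σ_j a_j Z_j²` of `O(2)` over `ℂP^n`
(with `a` strictly increasing and positive) are exactly the coordinate points:
a nonzero `Z` satisfies the critical point equations iff exactly one coordinate is nonzero. -/
theorem quadric_critical_points (n : ℕ) (hn : 1 ≤ n) (a : Fin (n + 1) → ℝ)
    (ha : StrictMono a) (ha0 : 0 < a 0) (Z : Fin (n + 1) → ℂ) (hZ : Z ≠ 0) :
    (∀ i, (a i : ℂ) * Z i * (∑ j, (Complex.normSq (Z j) : ℂ)) =
        (∑ j, (a j : ℂ) * Z j ^ 2) * (starRingEnd ℂ) (Z i)) ↔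
      ∃! i, Z i ≠ 0 := by
  have hapos : ∀ i, (0:ℝ) < a i := fun i => lt_of_lt_of_le ha0 (ha.monotone (Fin.zero_le i))
  have hcast : (∑ j, (Complex.normSq (Z j) : ℂ)) = ((∑ j, Complex.normSq (Z j) : ℝ) : ℂ) := by
    push_cast; ring
  constructor
  · intro h
    obtain ⟨i₀, hi₀⟩ : ∃ i, Z i ≠ 0 := by
      by_contra hc; push_neg at hc; exact hZ (funext hc)
    have hN : (0:ℝ) < ∑ j, Complex.normSq (Z j) := by
      apply Finset.sum_pos' (fun j _ => Complex.normSq_nonneg _)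
      exact ⟨i₀, Finset.mem_univ _, Complex.normSq_pos.2 hi₀⟩
    have key : ∀ i, Z i ≠ 0 →
        a i * (∑ j, Complex.normSq (Z j)) = ‖∑ j, (a j:ℂ) * Z j ^ 2‖ := by
      intro i hi
      have h' := congrArg norm (h i)
      rw [hcast] at h'
      rw [norm_mul, norm_mul, norm_mul, Complex.norm_real, Complex.norm_real,
        Complex.norm_conj] at h'
      rw [Real.norm_eq_abs, Real.norm_eq_abs, abs_of_pos (hapos i), abs_of_pos hN] at h'
      have hzi : ‖Z i‖ ≠ 0 := by simpa using hi
      exact mul_right_cancel₀ hzi (by linear_combination h')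
    refine ⟨i₀, hi₀, fun y hy => ?_⟩
    have h1 := key y hy
    have h2 := key i₀ hi₀
    have : a y = a i₀ := mul_right_cancel₀ hN.ne' (h1.trans h2.symm)
    exact ha.injective this
  · rintro ⟨i₀, hi₀, huniq⟩ i
    have hz : ∀ j, j ≠ i₀ → Z j = 0 := by
      intro j hj; by_contra hjz; exact hj (huniq j hjz)
    have hsum1 : (∑ j, (Complex.normSq (Z j) : ℂ)) = (Complex.normSq (Z i₀) : ℂ) := by
      apply Finset.sum_eq_single
      · intro j _ hj; rw [hz j hj]; simp
      · simp
    have hsum2 : (∑ j, (a j : ℂ) * Z j ^ 2) = (a i₀ : ℂ) * Z i₀ ^ 2 := by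
      apply Finset.sum_eq_single
      · intro j _ hj; rw [hz j hj]; ring
      · simp
    rw [hsum1, hsum2]
    rcases eq_or_ne i i₀ with rfl | hne
    · rw [← Complex.mul_conj]; ring
    · rw [hz i hne]; simp
end

section
/- Let n ≥ 1 and let a : Fin (n+1) → ℝ be strictly increasing with a 0 > 0. Suppose z : Fin n → ℂ satisfies, for every i ∈ Fin n, the equation (1 + Σ_{j} |z_j|²) · a_{i+1} · z_i = (a_0 + Σ_{j} a_{j+1} · z_j²) · conj(z_i). Then z = 0. (In the affine chart U_0 = {Z_0 ≠ 0} of ℂP^n with coordinates z_i = Z_i/Z_0, the origin is the only critical point of the quadric section s = Σ_j a_j Z_j² of O(2).) -/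
open Complex Finset

/-- In the affine chart `U_0 = {Z_0 ≠ 0}` of `ℂP^n`, the origin is the only critical point
of the quadric section `s = Σ_j a_j Z_j²` of `O(2)`, for `a` strictly increasing with `a 0 > 0`. -/
theorem quadric_critical_point_affine_chart (n : ℕ) (hn : 1 ≤ n) (a : Fin (n + 1) → ℝ)
    (ha : StrictMono a) (ha0 : 0 < a 0) (z : Fin n → ℂ)
    (hz : ∀ i : Fin n,
      ((1 : ℂ) + ∑ j, (Complex.normSq (z j) : ℂ)) * (a i.succ : ℂ) * z i =
        ((a 0 : ℂ) + ∑ j, (a j.succ : ℂ) * z j ^ 2) * (starRingEnd ℂ) (z i)) :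
    z = 0 := by
  set s : ℝ := ∑ j, Complex.normSq (z j) with hs
  have hs0 : 0 ≤ s := Finset.sum_nonneg fun j _ => Complex.normSq_nonneg _
  have hT : (∑ j, (Complex.normSq (z j) : ℂ)) = (s : ℂ) := by
    rw [hs]; push_cast; rfl
  set F : ℂ := (a 0 : ℂ) + ∑ j, (a j.succ : ℂ) * z j ^ 2 with hF
  have hz' : ∀ i, ((1 : ℂ) + (s : ℂ)) * (a i.succ : ℂ) * z i = F * (starRingEnd ℂ) (z i) := by
    intro i; have := hz i; rwa [hT] at this
  have hsum : ((1 : ℂ) + (s : ℂ)) * (∑ j, (a j.succ : ℂ) * z j ^ 2) = F * (s : ℂ) := by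
    rw [Finset.mul_sum]
    have : F * (s : ℂ) = ∑ j, F * (Complex.normSq (z j) : ℂ) := by
      rw [← Finset.mul_sum, hT]
    rw [this]
    refine Finset.sum_congr rfl fun j _ => ?_
    have h1 := hz' j
    calc ((1 : ℂ) + (s : ℂ)) * ((a j.succ : ℂ) * z j ^ 2)
        = (((1 : ℂ) + (s : ℂ)) * (a j.succ : ℂ) * z j) * z j := by ring
      _ = F * (starRingEnd ℂ) (z j) * z j := by rw [h1]
      _ = F * (Complex.normSq (z j) : ℂ) := by
          rw [mul_assoc, Complex.normSq_eq_conj_mul_self]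
  have hFval : F = ((1 : ℂ) + (s : ℂ)) * (a 0 : ℂ) := by
    have hFa : (∑ j, (a j.succ : ℂ) * z j ^ 2) = F - (a 0 : ℂ) := by rw [hF]; ring
    rw [hFa] at hsum
    linear_combination hsum
  have h1s : ((1 : ℂ) + (s : ℂ)) ≠ 0 := by
    have h : (1 + s : ℝ) ≠ 0 := by positivity
    exact_mod_cast h
  funext i
  have h2 : (a i.succ : ℂ) * z i = (a 0 : ℂ) * (starRingEnd ℂ) (z i) := by
    have h := hz' i
    rw [hFval] at h
    apply mul_left_cancel₀ h1s
    linear_combination h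
  have habs : (a i.succ) * ‖z i‖ = (a 0) * ‖z i‖ := by
    have := congrArg (‖·‖) h2
    simpa [norm_mul, Complex.norm_real, abs_of_pos (lt_trans ha0 (ha (Fin.succ_pos i))),
      abs_of_pos ha0] using this
  have hlt : a 0 < a i.succ := ha (Fin.succ_pos i)
  simp only [Pi.zero_apply]
  by_contra hne
  have hz0 : 0 < ‖z i‖ := norm_pos_iff.mpr hne
  nlinarith
end

section
/- Let n ≥ 1 and let b : Fin n → ℝ with b_j > 0 and b_j ≠ 1 for all j. Let D be the n×n diagonal complex matrix with diagonal entries 2·i·b_j, and let J be the 2n×2n block matrix J = [[−2·I, D], [Dᴴ, −2·I]] (where Dᴴ is the conjugate transpose). Then J is Hermitian, J is invertible, and the number of negative eigenvalues of J, counted with multiplicity, equals n + #{j : b_j < 1}. (In particular, when all b_j > 1 the index is n; this computes the Morse index n + i of log|s|² at the critical point p_i of the quadric s = Σ a_j Z_j² with 0 < a_0 < ⋯ < a_n, where b_j = a_j/a_i.) -/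
open Complex Matrix

open Polynomial

variable {R : Type*} [CommRing R] {m : Type*} [Fintype m] [DecidableEq m]

lemma my_charmatrix_diagonal (d : m → R) :
    charmatrix (Matrix.diagonal d) = Matrix.diagonal fun i => X - C (d i) := by
  ext i j
  by_cases h : i = j
  · subst h; simp
  · simp [h, Matrix.diagonal_apply_ne _ h]

lemma my_charpoly_diagonal (d : m → R) :
    (Matrix.diagonal d).charpoly = ∏ i, (X - C (d i)) := by
  rw [Matrix.charpoly, my_charmatrix_diagonal, Matrix.det_diagonal]

lemma my_charpoly_conj (U M V : Matrix m m R) (hUV : U * V = 1) :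
    (U * M * V).charpoly = M.charpoly := by
  have key : charmatrix (U * M * V) =
      (C : R →+* R[X]).mapMatrix U * charmatrix M * (C : R →+* R[X]).mapMatrix V := by
    simp only [charmatrix, mul_sub, sub_mul, RingHom.mapMatrix_apply, ← Matrix.map_mul]
    congr 1
    rw [Matrix.scalar_apply, ← Matrix.smul_one_eq_diagonal]
    rw [Matrix.mul_smul, Matrix.smul_mul, mul_one, ← Matrix.map_mul, hUV]
    simp [Matrix.smul_one_eq_diagonal]
  rw [Matrix.charpoly, key, det_mul, det_mul, Matrix.charpoly]
  have : ((C : R →+* R[X]).mapMatrix U).det * ((C : R →+* R[X]).mapMatrix V).det = 1 := by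
    rw [← det_mul, ← _root_.map_mul, hUV, _root_.map_one, det_one]
  rw [mul_comm (((C : R →+* R[X]).mapMatrix U).det), mul_assoc, this, mul_one]

lemma prod_X_sub_C_eq (f : m → R) :
    ∏ i, (X - C (f i)) = ((Finset.univ.val.map f).map fun a => X - C a).prod := by
  rw [Finset.prod_eq_multiset_prod, Multiset.map_map]; rfl

lemma roots_prod_X_sub_C' [IsDomain R] (f : m → R) :
    (∏ i, (X - C (f i))).roots = Finset.univ.val.map f := by
  rw [prod_X_sub_C_eq, Polynomial.roots_multiset_prod_X_sub_C]

/-- For `b : Fin n → ℝ` positive with `b j ≠ 1`, the block matrix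
`J = [[−2I, D], [Dᴴ, −2I]]` with `D = diag(2i b_j)` is Hermitian and invertible, and
its number of negative eigenvalues (with multiplicity) is `n + #{j | b j < 1}`. -/
theorem quadric_hessian_index (n : ℕ) (hn : 1 ≤ n) (b : Fin n → ℝ)
    (hb : ∀ j, 0 < b j) (hb1 : ∀ j, b j ≠ 1)
    (D : Matrix (Fin n) (Fin n) ℂ)
    (hD : D = Matrix.diagonal fun j => 2 * Complex.I * (b j : ℂ))
    (J : Matrix (Fin n ⊕ Fin n) (Fin n ⊕ Fin n) ℂ)
    (hJ : J = Matrix.fromBlocks ((-2 : ℂ) • 1) D Dᴴ ((-2 : ℂ) • 1)) :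
    ∃ hHerm : J.IsHermitian, IsUnit J ∧
      Nat.card {i // hHerm.eigenvalues i < 0} = n + Nat.card {j // b j < 1} := by
  classical
  set μ₁ : Fin n → ℝ := fun j => -2 - 2 * b j with hμ₁
  set μ₂ : Fin n → ℝ := fun j => -2 + 2 * b j with hμ₂
  set M : Matrix (Fin n ⊕ Fin n) (Fin n ⊕ Fin n) ℂ :=
    Matrix.fromBlocks (Matrix.diagonal fun j => (μ₁ j : ℂ)) 0 0
      (Matrix.diagonal fun j => (μ₂ j : ℂ)) with hM
  set U : Matrix (Fin n ⊕ Fin n) (Fin n ⊕ Fin n) ℂ :=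
    Matrix.fromBlocks 1 1 (Complex.I • 1) ((-Complex.I) • 1) with hU
  set V : Matrix (Fin n ⊕ Fin n) (Fin n ⊕ Fin n) ℂ :=
    Matrix.fromBlocks ((2⁻¹ : ℂ) • 1) ((-(2⁻¹ * Complex.I)) • 1)
      ((2⁻¹ : ℂ) • 1) ((2⁻¹ * Complex.I) • 1) with hV
  have hone : ∀ (c : ℂ), c = 1 → c • (1 : Matrix (Fin n) (Fin n) ℂ) = 1 := by
    rintro c rfl; rw [one_smul]
  have hzero : ∀ (c : ℂ), c = 0 → c • (1 : Matrix (Fin n) (Fin n) ℂ) = 0 := by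
    rintro c rfl; rw [zero_smul]
  have hDH : Dᴴ = Matrix.diagonal fun j => -(2 * Complex.I * (b j : ℂ)) := by
    rw [hD, Matrix.diagonal_conjTranspose, Matrix.diagonal_eq_diagonal_iff]
    intro j
    simp only [Pi.star_apply, Complex.star_def, _root_.map_mul, Complex.conj_ofReal,
      Complex.conj_I, map_ofNat]
    ring
  have hUV : U * V = 1 := by
    rw [hU, hV, Matrix.fromBlocks_multiply, ← Matrix.fromBlocks_one]
    simp only [Matrix.one_mul, Matrix.mul_one, Matrix.smul_mul, Matrix.mul_smul,
      smul_smul, ← add_smul]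
    rw [Matrix.fromBlocks_inj]
    refine ⟨?_, ?_, ?_, ?_⟩
    · exact hone _ (by norm_num)
    · exact hzero _ (by ring)
    · exact hzero _ (by ring)
    · exact hone _ (by linear_combination (-1 : ℂ) * Complex.I_mul_I)
  have hJUMV : J = U * M * V := by
    rw [hJ, hDH, hD, hM, hU, hV, Matrix.fromBlocks_multiply, Matrix.fromBlocks_multiply]
    simp only [Matrix.one_mul, Matrix.mul_one, Matrix.mul_zero, Matrix.zero_mul,
      Matrix.smul_mul, Matrix.mul_smul, smul_smul, add_zero, zero_add,
      Matrix.diagonal_mul_diagonal, Matrix.diagonal_smul, Matrix.diagonal_add,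
      Matrix.smul_one_eq_diagonal]
    rw [Matrix.fromBlocks_inj]
    refine ⟨?_, ?_, ?_, ?_⟩ <;>
    · rw [Matrix.diagonal_eq_diagonal_iff]
      intro j
      simp only [Pi.add_apply, Pi.mul_apply, Pi.smul_apply, smul_eq_mul, hμ₁, hμ₂]
      push_cast
      first
        | ring1
        | linear_combination (-2 : ℂ) * Complex.I_mul_I
  have hHerm : J.IsHermitian := by
    show Jᴴ = J
    rw [hJ, Matrix.fromBlocks_conjTranspose]
    congr 1 <;>
      simp [Matrix.conjTranspose_smul, Matrix.conjTranspose_conjTranspose, star_neg, star_ofNat]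
  have hdetUV : U.det * V.det = 1 := by rw [← Matrix.det_mul, hUV, Matrix.det_one]
  have hdetM : M.det ≠ 0 := by
    rw [hM, Matrix.det_fromBlocks_zero₁₂, Matrix.det_diagonal, Matrix.det_diagonal]
    refine mul_ne_zero (Finset.prod_ne_zero_iff.mpr fun j _ => ?_)
      (Finset.prod_ne_zero_iff.mpr fun j _ => ?_)
    · simp only [hμ₁, ne_eq, Complex.ofReal_eq_zero]
      nlinarith [hb j]
    · simp only [hμ₂, ne_eq, Complex.ofReal_eq_zero]
      intro h; exact hb1 j (by linarith)
  have hdetJ : J.det = M.det := by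
    rw [hJUMV, Matrix.det_mul, Matrix.det_mul, mul_comm U.det, mul_assoc, hdetUV, mul_one]
  have hunit : IsUnit J := by
    rw [Matrix.isUnit_iff_isUnit_det, hdetJ, isUnit_iff_ne_zero]
    exact hdetM
  refine ⟨hHerm, hunit, ?_⟩
  -- characteristic polynomial computations
  have hW : (hHerm.eigenvectorUnitary : Matrix (Fin n ⊕ Fin n) (Fin n ⊕ Fin n) ℂ) *
      star (hHerm.eigenvectorUnitary : Matrix (Fin n ⊕ Fin n) (Fin n ⊕ Fin n) ℂ) = 1 :=
    (Matrix.mem_unitaryGroup_iff).mp (hHerm.eigenvectorUnitary).2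
  have hcpL : J.charpoly = ∏ i, (X - C ((hHerm.eigenvalues i : ℂ))) := by
    conv_lhs => rw [hHerm.spectral_theorem, Unitary.conjStarAlgAut_apply]
    rw [my_charpoly_conj _ _ _ hW, my_charpoly_diagonal]
    rfl
  have hcpR : J.charpoly = (∏ j, (X - C ((μ₁ j : ℂ)))) * ∏ j, (X - C ((μ₂ j : ℂ))) := by
    rw [hJUMV, my_charpoly_conj _ _ _ hUV, hM, Matrix.charpoly_fromBlocks_zero₁₂,
      my_charpoly_diagonal, my_charpoly_diagonal]
  have hPne : (∏ j, (X - C ((μ₁ j : ℂ)))) ≠ 0 :=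
    (Polynomial.monic_prod_of_monic _ _ fun i _ => Polynomial.monic_X_sub_C _).ne_zero
  have hQne : (∏ j, (X - C ((μ₂ j : ℂ)))) ≠ 0 :=
    (Polynomial.monic_prod_of_monic _ _ fun i _ => Polynomial.monic_X_sub_C _).ne_zero
  have key : (Finset.univ.val.map fun i => ((hHerm.eigenvalues i : ℂ))) =
      (Finset.univ.val.map fun j => ((μ₁ j : ℂ))) +
        (Finset.univ.val.map fun j => ((μ₂ j : ℂ))) := by
    have h := congrArg Polynomial.roots (hcpL.symm.trans hcpR)
    rwa [roots_prod_X_sub_C', Polynomial.roots_mul (mul_ne_zero hPne hQne),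
      roots_prod_X_sub_C', roots_prod_X_sub_C'] at h
  have count_eq : ∀ {κ : Type} [Fintype κ] (g : κ → ℝ),
      Multiset.card (Multiset.filter (fun z : ℂ => z.re < 0)
          (Finset.univ.val.map fun i => ((g i : ℂ)))) = Nat.card {i // g i < 0} := by
    intro κ _ g
    rw [Multiset.filter_map]
    rw [Multiset.card_map, Nat.card_eq_fintype_card, Fintype.card_subtype, Finset.card_def,
      Finset.filter_val]
    congr 1
  have final := congrArg (fun s => Multiset.card (Multiset.filter (fun z : ℂ => z.re < 0) s)) key
  simp only [Multiset.filter_add, Multiset.card_add] at final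
  rw [count_eq, count_eq, count_eq] at final
  rw [final]
  congr 1
  · rw [Nat.card_eq_fintype_card, Fintype.card_subtype,
      Finset.filter_true_of_mem (fun j _ => by simp only [hμ₁]; nlinarith [hb j]),
      Finset.card_univ, Fintype.card_fin]
  · apply Nat.card_congr
    apply Equiv.subtypeEquivRight
    intro j
    simp only [hμ₂]
    constructor <;> intro h <;> linarith
end

section
/- Let m > 0 be a real number, n ≥ 1, and a : Fin n → ℂ. Let D be the diagonal matrix with entries 2·i·a_j and let J be the 2n×2n complex block matrix [[−m·I, D], [Dᴴ, −m·I]]. Then J is singular (det J = 0) if and only if there exists an index j with |a_j| = m/2. (This characterizes when 0 is a degenerate critical point of a section s of O(m) with f_s = 1 + Σ a_j z_j² + higher order terms.) -/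
open Matrix Complex

/-- Degeneracy criterion: for `m > 0` and `D = diag(2i a_j)`, the block matrix
`J = [[−mI, D], [Dᴴ, −mI]]` is singular iff some `|a_j| = m/2`. -/
theorem hessian_degenerate_iff (n : ℕ) (hn : 1 ≤ n) (m : ℝ) (hm : 0 < m)
    (a : Fin n → ℂ)
    (D : Matrix (Fin n) (Fin n) ℂ)
    (hD : D = Matrix.diagonal fun j => 2 * Complex.I * a j)
    (J : Matrix (Fin n ⊕ Fin n) (Fin n ⊕ Fin n) ℂ)
    (hJ : J = Matrix.fromBlocks ((-(m : ℂ)) • 1) D Dᴴ ((-(m : ℂ)) • 1)) :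
    J.det = 0 ↔ ∃ j, ‖a j‖ = m / 2 := by
  have hmC : (-(m : ℂ)) ≠ 0 := by
    simp only [ne_eq, neg_eq_zero, Complex.ofReal_eq_zero]
    exact hm.ne'
  have hA : ((-(m : ℂ)) • (1 : Matrix (Fin n) (Fin n) ℂ))
      = Matrix.diagonal (fun _ => -(m : ℂ)) := by
    ext i j
    by_cases h : i = j <;> simp [Matrix.diagonal_apply, h]
  subst hD hJ
  rw [hA, Matrix.diagonal_conjTranspose]
  haveI : Invertible (Matrix.diagonal (fun _ : Fin n => -(m : ℂ))) :=
    Matrix.invertibleOfIsUnitDet _ (by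
      simp only [Matrix.det_diagonal, Finset.prod_const]
      exact (IsUnit.pow _ (Ne.isUnit hmC)))
  rw [Matrix.det_fromBlocks₁₁, Matrix.invOf_eq_nonsing_inv, Matrix.inv_diagonal,
    Matrix.diagonal_mul_diagonal, Matrix.diagonal_mul_diagonal, Matrix.diagonal_sub,
    Matrix.det_diagonal, Matrix.det_diagonal]
  rw [mul_eq_zero]
  have hconst : ∏ _j : Fin n, (-(m:ℂ)) ≠ 0 := by
    simp only [Finset.prod_const]
    exact pow_ne_zero _ hmC
  simp only [hconst, false_or]
  rw [Finset.prod_eq_zero_iff]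
  have key : ∀ j : Fin n,
      (-(m:ℂ) - star (fun j => 2 * Complex.I * a j) j
          * Ring.inverse (fun _ : Fin n => -(m:ℂ)) j * (2 * Complex.I * a j) = 0)
        ↔ ‖a j‖ = m / 2 := by
    intro j
    have hRI : Ring.inverse (fun _ : Fin n => -(m:ℂ)) j = (-(m:ℂ))⁻¹ := by
      haveI : Invertible (fun _ : Fin n => -(m:ℂ)) :=
        ⟨fun _ => (-(m:ℂ))⁻¹, funext fun i => inv_mul_cancel₀ hmC,
          funext fun i => mul_inv_cancel₀ hmC⟩
      rw [Ring.inverse_invertible]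
      have := invOf_eq_right_inv
        (funext fun _ : Fin n => mul_inv_cancel₀ hmC :
          ((fun _ : Fin n => -(m:ℂ)) * fun _ => (-(m:ℂ))⁻¹) = 1)
      rw [this]
    have h4 : star (fun j => 2 * Complex.I * a j) j * (2 * Complex.I * a j)
        = ((4 * Complex.normSq (a j) : ℝ) : ℂ) := by
      show star (2 * Complex.I * a j) * (2 * Complex.I * a j) = _
      push_cast
      rw [← Complex.mul_conj (a j), Complex.star_def]
      simp only [_root_.map_mul, Complex.conj_I, map_ofNat]
      linear_combination (-4 * a j * (starRingEnd ℂ) (a j)) * Complex.I_sq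
    have hexpr : star (fun j => 2 * Complex.I * a j) j
        * Ring.inverse (fun _ : Fin n => -(m:ℂ)) j * (2 * Complex.I * a j)
        = ((4 * Complex.normSq (a j) : ℝ) : ℂ) * (-(m:ℂ))⁻¹ := by
      rw [hRI, ← h4]; ring
    rw [hexpr]
    have habs : ‖a j‖ = Real.sqrt (Complex.normSq (a j)) :=
      Complex.norm_def (a j)
    constructor
    · intro h
      field_simp at h
      have h' : ((m * m - 4 * Complex.normSq (a j) : ℝ) : ℂ) = 0 := by
        push_cast at h ⊢
        rcases div_eq_zero_iff.mp h with h | h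
        · linear_combination -h
        · exact absurd h (by exact_mod_cast hm.ne')
      have hns : 4 * Complex.normSq (a j) = m * m := by
        have := Complex.ofReal_eq_zero.mp h'
        linarith
      rw [habs]
      rw [show Complex.normSq (a j) = (m/2)^2 by nlinarith]
      exact Real.sqrt_sq (by positivity)
    · intro h
      have hns : Complex.normSq (a j) = m * m / 4 := by
        have h2 := Complex.sq_norm (a j)
        rw [h] at h2
        nlinarith
      rw [hns]
      push_cast
      field_simp
      ring
  simp only [Finset.mem_univ, true_and]
  exact exists_congr key
end

section
/- Let n ≥ 1, m ≥ 2, let p : Fin n → ℂ be nonzero, and let ξ : Fin n → ℂ be arbitrary. Then there exists a polynomial f in the variables z_1, …, z_n over ℂ with total degree at most m, whose homogeneous degree-one part vanishes (the coefficient of each monomial z_i is zero), such that f(p) = 0 and ∂f/∂z_i(p) = ξ_i for every i. -/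
open MvPolynomial

lemma coeff_single_CXX (n : ℕ) (i k j : Fin n) (a : ℂ) :
    MvPolynomial.coeff (Finsupp.single k 1) (C a * (X i * X j) : MvPolynomial (Fin n) ℂ) = 0 := by
  rw [show (C a * (X i * X j) : MvPolynomial (Fin n) ℂ) = monomial (Finsupp.single i 1 + Finsupp.single j 1) a by
    rw [X, X, C_apply, monomial_mul, monomial_mul, zero_add, mul_one, mul_one]]
  rw [coeff_monomial, if_neg]
  intro h
  have := congrArg (fun d : Fin n →₀ ℕ => Multiset.card d.toMultiset) h
  simp at this

/-- For any nonzero `p ∈ ℂⁿ` and any covector `ξ`, there is a polynomial `f` of total degree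
at most `m ≥ 2` with no linear term such that `f(p) = 0` and `∂f/∂z_i(p) = ξ_i` for all `i`. -/
theorem exists_section_vanishing_with_gradient (n m : ℕ) (hn : 1 ≤ n) (hm : 2 ≤ m)
    (p : Fin n → ℂ) (hp : p ≠ 0) (ξ : Fin n → ℂ) :
    ∃ f : MvPolynomial (Fin n) ℂ,
      f.totalDegree ≤ m ∧
      (∀ i : Fin n, f.coeff (Finsupp.single i 1) = 0) ∧
      MvPolynomial.eval p f = 0 ∧
      ∀ i : Fin n, MvPolynomial.eval p (MvPolynomial.pderiv i f) = ξ i := by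
  obtain ⟨j, hj⟩ : ∃ j, p j ≠ 0 := by
    by_contra h; push_neg at h; exact hp (funext h)
  set c : ℂ := ∑ k, ξ k * p k with hc
  set f : MvPolynomial (Fin n) ℂ :=
    (∑ k, C (ξ k / p j) * (X k * X j)) + C (-(c / (2 * p j ^ 2))) * (X j * X j)
      + C (-(c / 2)) with hf
  refine ⟨f, ?_, ?_, ?_, ?_⟩
  · -- total degree
    have h2 : ∀ (a : ℂ) (i k : Fin n),
        (C a * (X i * X k) : MvPolynomial (Fin n) ℂ).totalDegree ≤ 2 := by
      intro a i k
      calc (C a * (X i * X k) : MvPolynomial (Fin n) ℂ).totalDegree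
          ≤ (C a : MvPolynomial (Fin n) ℂ).totalDegree + (X i * X k : MvPolynomial (Fin n) ℂ).totalDegree := totalDegree_mul _ _
        _ ≤ 0 + ((X i : MvPolynomial (Fin n) ℂ).totalDegree + (X k : MvPolynomial (Fin n) ℂ).totalDegree) := by
            gcongr
            · exact le_of_eq (totalDegree_C a)
            · exact totalDegree_mul _ _
        _ ≤ 0 + (1 + 1) := by
            gcongr <;> exact le_of_eq (totalDegree_X _)
        _ = 2 := by norm_num
    refine le_trans ?_ hm
    refine le_trans (totalDegree_add _ _) ?_
    rw [max_le_iff]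
    constructor
    · refine le_trans (totalDegree_add _ _) ?_
      rw [max_le_iff]
      refine ⟨le_trans (totalDegree_finset_sum _ _) ?_, h2 _ _ _⟩
      exact Finset.sup_le fun k _ => h2 _ _ _
    · exact le_trans (le_of_eq (totalDegree_C _)) (by norm_num)
  · -- no linear term
    intro i
    rw [hf]
    simp only [coeff_add, coeff_sum]
    rw [Finset.sum_eq_zero (fun k _ => coeff_single_CXX n k i j _), coeff_single_CXX]
    rw [coeff_C, if_neg (fun h => by simpa using h.symm)]; simp
  · -- f(p) = 0
    rw [hf]
    simp only [map_add, map_sum, map_mul, eval_C, eval_X]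
    have : ∑ k, ξ k / p j * (p k * p j) = c := by
      rw [hc]; congr 1; ext k; field_simp
    rw [this]
    field_simp
    ring
  · -- gradient
    intro i
    rw [hf]
    simp only [map_add, map_mul, map_sum, pderiv_mul, pderiv_C, pderiv_X, eval_add, eval_mul,
      eval_C, eval_X, eval_sum, zero_mul, mul_zero, zero_add, add_zero, map_zero]
    simp only [Pi.single_apply, apply_ite (MvPolynomial.eval p), map_one, map_zero,
      mul_add, mul_ite, ite_mul, mul_zero, zero_mul, mul_one, one_mul,
      Finset.sum_add_distrib, Finset.sum_ite_eq', Finset.mem_univ, if_true]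
    rcases eq_or_ne j i with h | h
    · subst h
      simp only [if_true]
      have : ∑ x : Fin n, ξ x / p j * p x = c / p j := by
        rw [hc, Finset.sum_div]; congr 1; ext k; field_simp
      rw [this, div_mul_cancel₀ _ hj, pow_two]
      field_simp
      ring
    · simp only [if_neg h]
      simp [hj]
end

section
/- Let n ≥ 1 and let Z : Fin (n+1) → ℂ be nonzero. Then Z satisfies the critical point equations of the Fermat quadric section s = Σ_j Z_j² of O(2) over ℂP^n, namely Z_i · (Σ_j |Z_j|²) = (Σ_j Z_j²) · conj(Z_i) for every i, if and only if there exist λ ∈ ℂ and a real vector r : Fin (n+1) → ℝ such that Z_i = λ·r_i for all i. (Hence the critical set of the Fermat quadric section in ℂP^n is exactly the real projective space ℝP^n of real points.) -/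
open Complex Finset

/-- The critical set of the Fermat quadric section `s = Σ_j Z_j²` of `O(2)` over `ℂP^n`
is exactly the real projective space: a nonzero `Z` satisfies the critical point equations
iff `Z` is a complex multiple of a real vector. -/
theorem fermat_quadric_critical_points (n : ℕ) (hn : 1 ≤ n)
    (Z : Fin (n + 1) → ℂ) (hZ : Z ≠ 0) :
    (∀ i, Z i * (∑ j, (Complex.normSq (Z j) : ℂ)) =
        (∑ j, Z j ^ 2) * (starRingEnd ℂ) (Z i)) ↔
      ∃ (lam : ℂ) (r : Fin (n + 1) → ℝ), ∀ i, Z i = lam * (r i : ℂ) := by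
  constructor
  · intro h
    obtain ⟨i0, hi0⟩ : ∃ i, Z i ≠ 0 := by
      by_contra h'
      push_neg at h'
      exact hZ (funext h')
    set N : ℝ := ∑ j, Complex.normSq (Z j) with hNdef
    have hNpos : 0 < N := by
      apply Finset.sum_pos' (fun j _ => Complex.normSq_nonneg _)
      exact ⟨i0, Finset.mem_univ _, Complex.normSq_pos.mpr hi0⟩
    have hNne : (N : ℂ) ≠ 0 := by
      exact_mod_cast (Complex.ofReal_ne_zero).mpr hNpos.ne'
    set c : ℂ := ∑ j, Z j ^ 2 with hcdef
    have hcast : (∑ j, (Complex.normSq (Z j) : ℂ)) = (N : ℂ) := by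
      push_cast [hNdef]; rfl
    have h0 : Z i0 * (N : ℂ) = c * (starRingEnd ℂ) (Z i0) := by
      rw [← hcast]; exact h i0
    -- normSq c = N^2
    have hnsc : Complex.normSq c = N ^ 2 := by
      have hh := congrArg Complex.normSq h0
      simp only [Complex.normSq_mul, Complex.normSq_conj, Complex.normSq_ofReal] at hh
      have hz0 : 0 < Complex.normSq (Z i0) := Complex.normSq_pos.mpr hi0
      nlinarith [hh, hz0]
    obtain ⟨lam, hlam⟩ : ∃ lam : ℂ, lam ^ 2 = c / (N : ℂ) :=
      IsAlgClosed.exists_pow_nat_eq (c / (N : ℂ)) zero_lt_two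
    have hlam1 : lam * (starRingEnd ℂ) lam = 1 := by
      have h1 : Complex.normSq lam ^ 2 = 1 := by
        have hh := congrArg Complex.normSq hlam
        rw [map_pow Complex.normSq, Complex.normSq_div, Complex.normSq_ofReal, hnsc] at hh
        rw [hh]
        field_simp
      have h2 : Complex.normSq lam = 1 := by nlinarith [Complex.normSq_nonneg lam]
      rw [Complex.mul_conj, h2, Complex.ofReal_one]
    have hc : c = lam ^ 2 * (N : ℂ) := by
      rw [hlam]; field_simp
    have key : ∀ i, Z i = lam ^ 2 * (starRingEnd ℂ) (Z i) := by
      intro i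
      have hi := h i
      rw [hcast, hc] at hi
      have : Z i * (N : ℂ) = (lam ^ 2 * (starRingEnd ℂ) (Z i)) * (N : ℂ) := by
        rw [hi]; ring
      exact mul_right_cancel₀ hNne this
    have hreal : ∀ i, (starRingEnd ℂ) ((starRingEnd ℂ) lam * Z i) = (starRingEnd ℂ) lam * Z i := by
      intro i
      rw [map_mul, Complex.conj_conj]
      conv_rhs => rw [key i]
      have : (starRingEnd ℂ) lam * (lam ^ 2 * (starRingEnd ℂ) (Z i))
          = (lam * (starRingEnd ℂ) lam) * (lam * (starRingEnd ℂ) (Z i)) := by ring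
      rw [this, hlam1, one_mul]
    refine ⟨lam, fun i => ((starRingEnd ℂ) lam * Z i).re, fun i => ?_⟩
    have hre : (starRingEnd ℂ) lam * Z i = (((starRingEnd ℂ) lam * Z i).re : ℂ) :=
      (Complex.conj_eq_iff_re.mp (hreal i)).symm
    calc Z i = lam * ((starRingEnd ℂ) lam * Z i) := by
          rw [← mul_assoc, hlam1, one_mul]
      _ = lam * (((starRingEnd ℂ) lam * Z i).re : ℂ) := by rw [← hre]
  · rintro ⟨lam, r, hr⟩ i
    have e1 : (∑ j, (Complex.normSq (Z j) : ℂ)) = (lam * (starRingEnd ℂ) lam) * ∑ j, ((r j : ℂ) * r j) := by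
      rw [Finset.mul_sum]
      refine Finset.sum_congr rfl fun j _ => ?_
      rw [hr j, Complex.normSq_mul]
      push_cast
      rw [← Complex.mul_conj, ← Complex.mul_conj, Complex.conj_ofReal]
      try ring
    have e2 : (∑ j, Z j ^ 2) = lam ^ 2 * ∑ j, ((r j : ℂ) * r j) := by
      rw [Finset.mul_sum]
      refine Finset.sum_congr rfl fun j _ => ?_
      rw [hr j]; ring
    rw [e1, e2, hr i, map_mul, Complex.conj_ofReal]
    ring
end
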